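/- arXiv:1805.04227 — 2 statements merged into one kernel-verified Lean document; each statement's English description precedes it below -/
import Mathlib

section
/- Let S and I be finite sets, let w be a probability distribution on I, and for each i ∈ I let μ_i and ν_i be probability measures on S with ν_i(x) > 0 for every x ∈ S. Define the mixtures μ = Σ_{i∈I} w(i) μ_i and ν = Σ_{i∈I} w(i) ν_i. Then ‖μ − ν‖²_{L²(ν)} ≤ Σ_{i∈I} w(i) · ‖μ_i − ν_i‖²_{L²(ν_i)}. -/
open Finset Filter MeasureTheory

noncomputable section

open scoped Classical

variable {V : Type} [Fintype V] [DecidableEq V]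

/-- The finset of monochromatic edges of the configuration `σ`. -/
def monoEdges (G : SimpleGraph V) {q : ℕ} (σ : V → Fin q) : Finset (Sym2 V) :=
  G.edgeFinset.filter fun e => ∀ u ∈ e, ∀ v ∈ e, σ u = σ v

/-- The number of connected components of the graph `(V, ω)` (isolated vertices count
as components). -/
def numComp (ω : Finset (Sym2 V)) : ℕ :=
  Nat.card (SimpleGraph.fromEdgeSet (↑ω : Set (Sym2 V))).ConnectedComponent

/-- `τ` is constant on every connected component of the graph `(V, ω)`. -/
def constOnComp {q : ℕ} (ω : Finset (Sym2 V)) (τ : V → Fin q) : Prop :=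
  ∀ u v : V, (SimpleGraph.fromEdgeSet (↑ω : Set (Sym2 V))).Reachable u v → τ u = τ v

/-- Transition matrix of the Swendsen–Wang dynamics for the `q`-state Potts model,
with percolation parameter `p = 1 - exp (-β)`. -/
def swMatrix (G : SimpleGraph V) (q : ℕ) (p : ℝ) :
    Matrix (V → Fin q) (V → Fin q) ℝ :=
  Matrix.of fun σ τ =>
    ∑ ω ∈ (monoEdges G σ).powerset,
      p ^ ω.card * (1 - p) ^ ((monoEdges G σ).card - ω.card) * ((q : ℝ) ^ numComp ω)⁻¹ *
        (if constOnComp ω τ then 1 else 0)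

/-- The `q`-state Potts measure at inverse temperature `β` where `p = 1 - exp (-β)`,
so that `exp (β * k) = ((1 - p) ^ k)⁻¹`. -/
def pottsPi (G : SimpleGraph V) (q : ℕ) (p : ℝ) : (V → Fin q) → ℝ := fun σ =>
  ((1 - p) ^ (monoEdges G σ).card)⁻¹ /
    ∑ τ : V → Fin q, ((1 - p) ^ (monoEdges G τ).card)⁻¹

/-- Total-variation distance between two (probability) vectors. -/
def tvDist {S : Type} [Fintype S] (μ ν : S → ℝ) : ℝ := (∑ x, |μ x - ν x|) / 2

/-- `L²(ν)` distance between two (probability) vectors. -/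
def l2Dist {S : Type} [Fintype S] (μ ν : S → ℝ) : ℝ :=
  Real.sqrt (∑ x, (μ x / ν x - 1) ^ 2 * ν x)

/-- Worst-case total-variation distance from stationarity at time `t`. -/
def swTV (G : SimpleGraph V) (q : ℕ) (p : ℝ) (t : ℕ) : ℝ :=
  ⨆ x₀ : V → Fin q, tvDist (fun y => (swMatrix G q p ^ t) x₀ y) (pottsPi G q p)

/-- Worst-case `L²(π)` distance from stationarity at time `t`. -/
def swL2 (G : SimpleGraph V) (q : ℕ) (p : ℝ) (t : ℕ) : ℝ :=
  ⨆ x₀ : V → Fin q, l2Dist (fun y => (swMatrix G q p ^ t) x₀ y) (pottsPi G q p)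

/-- Mixing time of the Swendsen–Wang dynamics. -/
def swMix (G : SimpleGraph V) (q : ℕ) (p : ℝ) (ε : ℝ) : ℕ :=
  sInf {t : ℕ | swTV G q p t ≤ ε}

/-- Spectral gap of the (reversible) Swendsen–Wang dynamics: `1` minus the largest
absolute value of an eigenvalue on the space of `π`-mean-zero functions. -/
def swGap (G : SimpleGraph V) (q : ℕ) (p : ℝ) : ℝ :=
  1 - sSup {x : ℝ | ∃ lam : ℝ, x = |lam| ∧ ∃ f : (V → Fin q) → ℝ, f ≠ 0 ∧
      (∑ σ, pottsPi G q p σ * f σ) = 0 ∧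
      ∀ σ, (∑ τ, swMatrix G q p σ τ * f τ) = lam * f σ}

/-- The `d`-dimensional discrete torus of side length `n` (nearest-neighbour graph with
periodic boundary conditions). -/
def torus (d n : ℕ) : SimpleGraph (Fin d → ZMod n) where
  Adj x y := x ≠ y ∧ ∃ i, (x i = y i + 1 ∨ y i = x i + 1) ∧ ∀ j, j ≠ i → x j = y j
  symm := ⟨by
    rintro x y ⟨hxy, i, h1, h2⟩
    exact ⟨hxy.symm, i, h1.symm, fun j hj => (h2 j hj).symm⟩⟩
  loopless := ⟨fun x h => h.1 rfl⟩

/-- Spectral gap of the Swendsen–Wang dynamics on the torus `ℤ_n^d` (junk value for `n = 0`). -/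
def torusGap (d q : ℕ) (p : ℝ) (n : ℕ) : ℝ :=
  if h : n = 0 then 0 else
    letI : NeZero n := ⟨h⟩
    swGap (torus d n) q p

/-- Worst-case TV distance from stationarity of SW dynamics on `ℤ_n^d` at time `t`. -/
def torusTV (d q : ℕ) (p : ℝ) (n t : ℕ) : ℝ :=
  if h : n = 0 then 0 else
    letI : NeZero n := ⟨h⟩
    swTV (torus d n) q p t

/-- Mixing time of the SW dynamics on `ℤ_n^d`. -/
def torusMix (d q : ℕ) (p : ℝ) (n : ℕ) (ε : ℝ) : ℕ :=
  if h : n = 0 then 0 else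
    letI : NeZero n := ⟨h⟩
    swMix (torus d n) q p ε

/-- `γ⋆(r) = log (1 / (1 - γ(r)))` where `γ(r)` is the gap on `ℤ_r^d`. -/
def gammaStarAt (d q : ℕ) (p : ℝ) (r : ℕ) : ℝ :=
  Real.log (1 / (1 - torusGap d q p r))

/-- Marginal (push-forward) of a measure along a map `f`. -/
def marginal {S T : Type} [Fintype S] (μ : S → ℝ) (f : S → T) : T → ℝ :=
  fun y => ∑ x ∈ Finset.univ.filter (fun x => f x = y), μ x

/-- The subcube of side length `m` inside the torus of side length `r`. -/
def cube (d r m : ℕ) : Set (Fin d → ZMod r) := {x | ∀ i, (x i).val < m}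

/-- Worst-case `L²` distance from stationarity of the marginal on the subcube of side
length `m` of the SW dynamics on `ℤ_r^d` at time `t`. -/
def projL2 (d q r m : ℕ) (p : ℝ) (t : ℕ) : ℝ :=
  if h : r = 0 then 0 else
    letI : NeZero r := ⟨h⟩
    ⨆ x₀ : (Fin d → ZMod r) → Fin q,
      l2Dist
        (marginal (fun y => (swMatrix (torus d r) q p ^ t) x₀ y)
          (fun σ (v : ↥(cube d r m)) => σ v.1))
        (marginal (pottsPi (torus d r) q p) (fun σ (v : ↥(cube d r m)) => σ v.1))

/-- Worst-case TV distance from stationarity of the marginal on the subcube of side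
length `m` of the SW dynamics on `ℤ_r^d` at time `t`. -/
def projTV (d q r m : ℕ) (p : ℝ) (t : ℕ) : ℝ :=
  if h : r = 0 then 0 else
    letI : NeZero r := ⟨h⟩
    ⨆ x₀ : (Fin d → ZMod r) → Fin q,
      tvDist
        (marginal (fun y => (swMatrix (torus d r) q p ^ t) x₀ y)
          (fun σ (v : ↥(cube d r m)) => σ v.1))
        (marginal (pottsPi (torus d r) q p) (fun σ (v : ↥(cube d r m)) => σ v.1))

/-- The quantity `m_t` of the paper: `r = 3 log⁵ n` and `Λ` a subcube of side `2 log⁵ n`. -/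
def mOf (d q : ℕ) (p : ℝ) (n t : ℕ) : ℝ :=
  projL2 d q ⌊3 * Real.log n ^ 5⌋₊ ⌊2 * Real.log n ^ 5⌋₊ p t

/-- The quantity `m_t*` of the paper: the TV analogue of `m_t`. -/
def mStarOf (d q : ℕ) (p : ℝ) (n t : ℕ) : ℝ :=
  projTV d q ⌊3 * Real.log n ^ 5⌋₊ ⌊2 * Real.log n ^ 5⌋₊ p t

/-- `γ⋆(r)` with `r = 3 log⁵ n`. -/
def gammaStarN (d q : ℕ) (p : ℝ) (n : ℕ) : ℝ :=
  gammaStarAt d q p ⌊3 * Real.log n ^ 5⌋₊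


/-- Jensen-type inequality for mixtures: the squared `L²(ν)` distance of mixtures is at
most the average of the squared `L²(ν_i)` distances. -/
theorem l2_mixture {S I : Type} [Fintype S] [Fintype I]
    (w : I → ℝ) (hw0 : ∀ i, 0 ≤ w i) (hw1 : ∑ i, w i = 1)
    (μ ν : I → S → ℝ)
    (hμ : ∀ i, (∀ x, 0 ≤ μ i x) ∧ ∑ x, μ i x = 1)
    (hν : ∀ i, (∀ x, 0 < ν i x) ∧ ∑ x, ν i x = 1) :
    l2Dist (fun x => ∑ i, w i * μ i x) (fun x => ∑ i, w i * ν i x) ^ 2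
      ≤ ∑ i, w i * l2Dist (μ i) (ν i) ^ 2 := by
  classical
  have hv : ∀ x, 0 < ∑ i, w i * ν i x := by
    intro x
    obtain ⟨i, hi⟩ : ∃ i, 0 < w i := by
      by_contra h
      push_neg at h
      have h0 : ∑ i, w i = 0 := Finset.sum_eq_zero fun i _ => le_antisymm (h i) (hw0 i)
      rw [h0] at hw1; norm_num at hw1
    exact Finset.sum_pos' (fun j _ => mul_nonneg (hw0 j) ((hν j).1 x).le)
      ⟨i, Finset.mem_univ i, mul_pos hi ((hν i).1 x)⟩
  have hterm : ∀ (a b : ℝ), 0 < b → (a / b - 1) ^ 2 * b = (a - b) ^ 2 / b := by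
    intro a b hb; field_simp
  rw [l2Dist, Real.sq_sqrt (Finset.sum_nonneg fun x _ =>
    mul_nonneg (sq_nonneg _) (hv x).le)]
  have hR : ∀ i, l2Dist (μ i) (ν i) ^ 2 = ∑ x, (μ i x / ν i x - 1) ^ 2 * ν i x :=
    fun i => Real.sq_sqrt (Finset.sum_nonneg fun x _ =>
      mul_nonneg (sq_nonneg _) ((hν i).1 x).le)
  simp_rw [hR, Finset.mul_sum]
  rw [show (∑ i, ∑ x, w i * ((μ i x / ν i x - 1) ^ 2 * ν i x))
      = ∑ x, ∑ i, w i * ((μ i x / ν i x - 1) ^ 2 * ν i x) from Finset.sum_comm]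
  refine Finset.sum_le_sum fun x _ => ?_
  rw [← Finset.mul_sum, hterm _ _ (hv x)]
  set t := Finset.univ.filter (fun i => w i ≠ 0) with ht
  have hnum : (∑ i, w i * μ i x) - ∑ i, w i * ν i x
      = ∑ i ∈ t, w i * (μ i x - ν i x) := by
    rw [← Finset.sum_sub_distrib, Finset.sum_filter]
    refine Finset.sum_congr rfl fun i _ => ?_
    by_cases h : w i = 0 <;> simp [h, mul_sub]
  have hden : (∑ i, w i * ν i x) = ∑ i ∈ t, w i * ν i x := by
    rw [Finset.sum_filter]
    refine Finset.sum_congr rfl fun i _ => ?_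
    by_cases h : w i = 0 <;> simp [h]
  rw [hnum, hden]
  have hCS := Finset.sq_sum_div_le_sum_sq_div t (fun i => w i * (μ i x - ν i x))
    (g := fun i => w i * ν i x) (fun i hi => mul_pos
      (lt_of_le_of_ne (hw0 i) (Ne.symm (Finset.mem_filter.mp hi).2)) ((hν i).1 x))
  refine hCS.trans (le_of_eq ?_)
  have hRHS : (∑ i, w i * ((μ i x / ν i x - 1) ^ 2 * ν i x))
      = ∑ i ∈ t, w i * ((μ i x / ν i x - 1) ^ 2 * ν i x) := by
    rw [Finset.sum_filter]
    refine Finset.sum_congr rfl fun i _ => ?_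
    by_cases h : w i = 0 <;> simp [h]
  rw [hRHS]
  refine Finset.sum_congr rfl fun i hi => ?_
  have hwi : w i ≠ 0 := (Finset.mem_filter.mp hi).2
  have hνi : ν i x ≠ 0 := ((hν i).1 x).ne'
  field_simp

end
end

section
/- Let V be a finite set, q ≥ 2 an integer, and Ω = {1,…,q}^V. Let η be a probability distribution on the subsets of V, and for each R ⊆ V let φ_R be a probability measure on {1,…,q}^R. Let μ be the probability measure on Ω obtained by sampling R ⊆ V according to η, sampling the coordinates in R according to φ_R, and independently sampling each coordinate in V∖R uniformly at random from {1,…,q}; explicitly μ(x) = Σ_{R⊆V} η(R) φ_R(x|_R) q^{−|V∖R|}. Let ν be the uniform measure on Ω. Then ‖μ − ν‖²_{L²(ν)} ≤ E[q^{|R∩R'|}] − 1, where R and R' are independent random subsets of V each with law η. -/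
open Finset Filter MeasureTheory

noncomputable section

open scoped Classical

variable {V : Type} [Fintype V] [DecidableEq V]

lemma mp_card_subtype {V : Type} [Fintype V] [DecidableEq V] (T : Finset V) :
    Fintype.card {v : V // ¬ v ∈ T} = Tᶜ.card := by
  rw [← Fintype.card_coe (Tᶜ)]
  exact Fintype.card_congr (Equiv.subtypeEquivRight fun v => (Finset.mem_compl).symm)

lemma mp_sum_restrict {V : Type} [Fintype V] [DecidableEq V] (q : ℕ) (T : Finset V)
    (G : ({v // v ∈ T} → Fin q) → ℝ) :
    ∑ x : V → Fin q, G (fun v => x v.1) = (q : ℝ) ^ Tᶜ.card * ∑ y, G y := by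
  rw [← Equiv.sum_comp (Equiv.piEquivPiSubtypeProd (fun v : V => v ∈ T)
    (fun _ => Fin q)).symm (fun x : V → Fin q => G (fun v => x v.1))]
  have h : ∀ p : ({v : V // v ∈ T} → Fin q) × ({v : V // ¬ v ∈ T} → Fin q),
      G (fun v => (Equiv.piEquivPiSubtypeProd (fun v : V => v ∈ T)
        (fun _ => Fin q)).symm p v.1) = G p.1 := by
    intro p
    congr 1
    funext v
    simp [Equiv.piEquivPiSubtypeProd, dif_pos v.2]
  simp only [h]
  rw [Fintype.sum_prod_type]
  simp only [Finset.sum_const, Finset.card_univ, nsmul_eq_mul]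
  rw [← Finset.mul_sum, Fintype.card_fun, Fintype.card_fin, mp_card_subtype]
  push_cast
  ring

lemma mp_sum_comp_le {α β : Type} [Fintype α] [Fintype β] [DecidableEq β]
    (m : α → β) (G : β → ℝ) (hG : ∀ b, 0 ≤ G b) (k : ℕ)
    (hk : ∀ b : β, (Finset.univ.filter fun a => m a = b).card ≤ k) :
    ∑ a, G (m a) ≤ (k : ℝ) * ∑ b, G b := by
  rw [Finset.sum_comp]
  calc ∑ b ∈ Finset.univ.image m, (Finset.univ.filter fun a => m a = b).card • G b
      ≤ ∑ b ∈ Finset.univ.image m, (k : ℝ) * G b := by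
        apply Finset.sum_le_sum; intro b _
        rw [nsmul_eq_mul]
        exact mul_le_mul_of_nonneg_right (by exact_mod_cast hk b) (hG b)
    _ ≤ ∑ b, (k : ℝ) * G b := by
        apply Finset.sum_le_sum_of_subset_of_nonneg (Finset.subset_univ _)
        intro b _ _; exact mul_nonneg (by positivity) (hG b)
    _ = (k : ℝ) * ∑ b, G b := by rw [Finset.mul_sum]

lemma mp_cross {V : Type} [Fintype V] [DecidableEq V] {q : ℕ}
    (R R' : Finset V)
    (f : ({v // v ∈ R} → Fin q) → ℝ) (g : ({v // v ∈ R'} → Fin q) → ℝ)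
    (hf0 : ∀ y, 0 ≤ f y) (hg0 : ∀ y, 0 ≤ g y)
    (hf1 : ∑ y, f y = 1) (hg1 : ∑ y, g y = 1) :
    ∑ x : V → Fin q, f (fun v => x v.1) * g (fun v => x v.1)
      ≤ (q : ℝ) ^ ((R ∪ R')ᶜ.card) := by
  set β := (({v : V // v ∈ R} → Fin q) × ({v : V // v ∈ R'} → Fin q))
  set m : (V → Fin q) → β := fun x => (fun v => x v.1, fun v => x v.1) with hm
  have hcard : ∀ b : β,
      (Finset.univ.filter fun x : V → Fin q => m x = b).card ≤ q ^ ((R ∪ R')ᶜ.card) := by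
    intro b
    have : (Finset.univ.filter fun x : V → Fin q => m x = b).card
        ≤ (Finset.univ : Finset ({v : V // v ∈ (R ∪ R')ᶜ} → Fin q)).card := by
      apply Finset.card_le_card_of_injOn
        (fun x => fun v : {v : V // v ∈ (R ∪ R')ᶜ} => x v.1)
      · intro x _; exact Finset.mem_univ _
      · intro x hx y hy hxy
        simp only [Finset.mem_coe, Finset.mem_filter, hm] at hx hy
        have hx1 := congrArg Prod.fst hx.2
        have hx2 := congrArg Prod.snd hx.2
        have hy1 := congrArg Prod.fst hy.2
        have hy2 := congrArg Prod.snd hy.2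
        funext v
        by_cases h1 : v ∈ R
        · have := congrFun (hx1.trans hy1.symm) ⟨v, h1⟩
          exact this
        · by_cases h2 : v ∈ R'
          · exact congrFun (hx2.trans hy2.symm) ⟨v, h2⟩
          · have hv : v ∈ (R ∪ R')ᶜ := by simp [h1, h2]
            exact congrFun hxy ⟨v, hv⟩
    rwa [Finset.card_univ, Fintype.card_fun, Fintype.card_fin, Fintype.card_coe] at this
  have := mp_sum_comp_le m (fun p => f p.1 * g p.2)
    (fun p => mul_nonneg (hf0 _) (hg0 _)) (q ^ ((R ∪ R')ᶜ.card)) hcard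
  simp only [hm] at this
  calc ∑ x : V → Fin q, f (fun v => x v.1) * g (fun v => x v.1)
      ≤ ((q ^ ((R ∪ R')ᶜ.card) : ℕ) : ℝ) * ∑ p : β, f p.1 * g p.2 := this
    _ = (q : ℝ) ^ ((R ∪ R')ᶜ.card) := by
        rw [Fintype.sum_prod_type, ← Finset.sum_mul_sum, hf1, hg1]
        push_cast
        ring


/-- The Miller–Peres lemma: if `μ` is obtained by sampling `R ⊆ V` via `η`, colouring
`R` via `φ_R` and colouring `V∖R` uniformly, and `ν` is uniform on `{1,…,q}^V`, then
`‖μ - ν‖²_{L²(ν)} ≤ E[q^{|R ∩ R'|}] - 1` for `R, R'` i.i.d. with law `η`. -/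
theorem miller_peres {V : Type} [Fintype V] [DecidableEq V] (q : ℕ) (hq : 2 ≤ q)
    (η : Finset V → ℝ) (hη0 : ∀ R, 0 ≤ η R) (hη1 : ∑ R : Finset V, η R = 1)
    (φ : ∀ R : Finset V, ({v // v ∈ R} → Fin q) → ℝ)
    (hφ : ∀ R : Finset V, (∀ y, 0 ≤ φ R y) ∧ ∑ y, φ R y = 1) :
    l2Dist
        (fun x : V → Fin q =>
          ∑ R : Finset V, η R * φ R (fun v => x v.1) * ((q : ℝ) ^ Rᶜ.card)⁻¹)
        (fun _ : V → Fin q => ((q : ℝ) ^ Fintype.card V)⁻¹) ^ 2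
      ≤ (∑ R : Finset V, ∑ R' : Finset V, η R * η R' * (q : ℝ) ^ (R ∩ R').card) - 1 := by
  have hq0 : (0 : ℝ) < (q : ℝ) := by
    have : (0:ℕ) < q := by omega
    exact_mod_cast this
  set n := Fintype.card V with hn
  set μ : (V → Fin q) → ℝ := fun x =>
    ∑ R : Finset V, η R * φ R (fun v => x v.1) * ((q : ℝ) ^ Rᶜ.card)⁻¹ with hμdef
  have hrest : ∀ R : Finset V,
      ∑ x : V → Fin q, φ R (fun v => x v.1) = (q : ℝ) ^ Rᶜ.card := by
    intro R
    rw [mp_sum_restrict, (hφ R).2, mul_one]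
  have hμsum : ∑ x : V → Fin q, μ x = 1 := by
    simp only [hμdef]
    rw [Finset.sum_comm]
    rw [← hη1]
    apply Finset.sum_congr rfl
    intro R _
    rw [← Finset.sum_mul, ← Finset.mul_sum, hrest R]
    field_simp
  have hL2 : l2Dist μ (fun _ : V → Fin q => ((q : ℝ) ^ n)⁻¹) ^ 2
      = (∑ x : V → Fin q, μ x ^ 2) * (q : ℝ) ^ n - 1 := by
    rw [l2Dist, Real.sq_sqrt (Finset.sum_nonneg fun x _ => by positivity)]
    have hpt : ∀ x : V → Fin q, (μ x / ((q : ℝ) ^ n)⁻¹ - 1) ^ 2 * ((q : ℝ) ^ n)⁻¹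
        = μ x ^ 2 * (q : ℝ) ^ n - 2 * μ x + ((q : ℝ) ^ n)⁻¹ := by
      intro x
      have h1 : ((q : ℝ) ^ n) ≠ 0 := by positivity
      field_simp
      ring
    simp only [hpt]
    rw [Finset.sum_add_distrib, Finset.sum_sub_distrib, ← Finset.sum_mul,
      ← Finset.mul_sum, hμsum, Finset.sum_const, Finset.card_univ,
      Fintype.card_fun, Fintype.card_fin, nsmul_eq_mul]
    push_cast
    rw [mul_inv_cancel₀ (by positivity : ((q:ℝ) ^ n) ≠ 0)]
    ring
  have hmain : (∑ x : V → Fin q, μ x ^ 2) * (q : ℝ) ^ n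
      ≤ ∑ R : Finset V, ∑ R' : Finset V, η R * η R' * (q : ℝ) ^ (R ∩ R').card := by
    have hexp : ∑ x : V → Fin q, μ x ^ 2 = ∑ R : Finset V, ∑ R' : Finset V,
        ∑ x : V → Fin q,
          (η R * φ R (fun v => x v.1) * ((q : ℝ) ^ Rᶜ.card)⁻¹) *
          (η R' * φ R' (fun v => x v.1) * ((q : ℝ) ^ R'ᶜ.card)⁻¹) := by
      simp only [hμdef, sq, Finset.sum_mul_sum]
      rw [Finset.sum_comm]
      apply Finset.sum_congr rfl
      intro R _
      rw [Finset.sum_comm]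
    rw [hexp, Finset.sum_mul]
    apply Finset.sum_le_sum
    intro R _
    rw [Finset.sum_mul]
    apply Finset.sum_le_sum
    intro R' _
    have hK : (∑ x : V → Fin q,
        (η R * φ R (fun v => x v.1) * ((q : ℝ) ^ Rᶜ.card)⁻¹) *
        (η R' * φ R' (fun v => x v.1) * ((q : ℝ) ^ R'ᶜ.card)⁻¹))
        = (η R * η R' * ((q : ℝ) ^ Rᶜ.card)⁻¹ * ((q : ℝ) ^ R'ᶜ.card)⁻¹) *
          ∑ x : V → Fin q, φ R (fun v => x v.1) * φ R' (fun v => x v.1) := by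
      rw [Finset.mul_sum]
      exact Finset.sum_congr rfl fun x _ => by ring
    rw [hK]
    have hcross := mp_cross R R' (φ R) (φ R') (hφ R).1 (hφ R').1 (hφ R).2 (hφ R').2
    have hKnn : 0 ≤ η R * η R' * ((q : ℝ) ^ Rᶜ.card)⁻¹ * ((q : ℝ) ^ R'ᶜ.card)⁻¹ := by
      have := hη0 R; have := hη0 R'; positivity
    calc (η R * η R' * ((q : ℝ) ^ Rᶜ.card)⁻¹ * ((q : ℝ) ^ R'ᶜ.card)⁻¹) *
          (∑ x : V → Fin q, φ R (fun v => x v.1) * φ R' (fun v => x v.1)) * (q : ℝ) ^ n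
        ≤ (η R * η R' * ((q : ℝ) ^ Rᶜ.card)⁻¹ * ((q : ℝ) ^ R'ᶜ.card)⁻¹) *
          ((q : ℝ) ^ ((R ∪ R')ᶜ.card)) * (q : ℝ) ^ n := by
          apply mul_le_mul_of_nonneg_right _ (by positivity)
          exact mul_le_mul_of_nonneg_left hcross hKnn
      _ = η R * η R' * (q : ℝ) ^ (R ∩ R').card := by
          have hcd : (R ∪ R')ᶜ.card + n
              = Rᶜ.card + R'ᶜ.card + (R ∩ R').card := by
            have h1 := Finset.card_add_card_compl R
            have h2 := Finset.card_add_card_compl R'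
            have h3 := Finset.card_add_card_compl (R ∪ R')
            have h4 := Finset.card_inter_add_card_union R R'
            omega
          have hpw : (q : ℝ) ^ ((R ∪ R')ᶜ.card) * (q : ℝ) ^ n
              = (q : ℝ) ^ Rᶜ.card * ((q : ℝ) ^ R'ᶜ.card * (q : ℝ) ^ (R ∩ R').card) := by
            rw [← pow_add, ← pow_add, ← pow_add, hcd, add_assoc]
          have h5 : ((q : ℝ) ^ Rᶜ.card)⁻¹ * ((q : ℝ) ^ R'ᶜ.card)⁻¹ *
              ((q : ℝ) ^ ((R ∪ R')ᶜ.card) * (q : ℝ) ^ n) = (q : ℝ) ^ (R ∩ R').card := by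
            rw [hpw]
            have hne1 : ((q : ℝ) ^ Rᶜ.card) ≠ 0 := by positivity
            have hne2 : ((q : ℝ) ^ R'ᶜ.card) ≠ 0 := by positivity
            field_simp
          linear_combination (η R * η R') * h5
  calc l2Dist μ (fun _ : V → Fin q => ((q : ℝ) ^ n)⁻¹) ^ 2
      = (∑ x : V → Fin q, μ x ^ 2) * (q : ℝ) ^ n - 1 := hL2
    _ ≤ (∑ R : Finset V, ∑ R' : Finset V, η R * η R' * (q : ℝ) ^ (R ∩ R').card) - 1 := by
        linarith


end
end
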